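/- With the Case 1 Frenet frame for a spacelike curve in AdS⁴ and λ₀ = γ(s₀) - (1/κ₁(s₀))(n^T(s₀)+cos θ₀ b₁(s₀)+sin θ₀ b₂(s₀)), the third derivative of the height function h(s) = ⟨γ(s),λ₀⟩+1 vanishes at s₀ (in addition to h = h' = h'' = 0) if and only if κ₁'(s₀) - cos θ₀ κ₁(s₀)κ₂(s₀) = 0. -/

import Mathlib

/-- The pseudo scalar product of index 2 on `ℝ^{n+2}`. -/
noncomputable def pr {n : ℕ} (x y : Fin (n + 2) → ℝ) : ℝ :=
  ∑ i : Fin (n + 2), (if (i : ℕ) < 2 then (-1 : ℝ) else 1) * x i * y i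

lemma pr_comm {n : ℕ} (x y : Fin (n + 2) → ℝ) : pr x y = pr y x := by
  unfold pr; exact Finset.sum_congr rfl fun i _ => by ring

lemma pr_add_right {n : ℕ} (x y z : Fin (n + 2) → ℝ) :
    pr x (y + z) = pr x y + pr x z := by
  unfold pr; rw [← Finset.sum_add_distrib]
  exact Finset.sum_congr rfl fun i _ => by by_cases h : (i:ℕ)<2 <;> simp [h] <;> ring

lemma pr_sub_right {n : ℕ} (x y z : Fin (n + 2) → ℝ) :
    pr x (y - z) = pr x y - pr x z := by
  unfold pr; rw [← Finset.sum_sub_distrib]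
  exact Finset.sum_congr rfl fun i _ => by by_cases h : (i:ℕ)<2 <;> simp [h] <;> ring

lemma pr_smul_right {n : ℕ} (c : ℝ) (x y : Fin (n + 2) → ℝ) :
    pr x (c • y) = c * pr x y := by
  unfold pr; rw [Finset.mul_sum]
  exact Finset.sum_congr rfl fun i _ => by simp [Pi.smul_apply, smul_eq_mul]; ring

lemma pr_add_left {n : ℕ} (x y z : Fin (n + 2) → ℝ) :
    pr (x + y) z = pr x z + pr y z := by
  rw [pr_comm, pr_add_right, pr_comm x z, pr_comm y z]

lemma pr_smul_left {n : ℕ} (c : ℝ) (x y : Fin (n + 2) → ℝ) :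
    pr (c • x) y = c * pr x y := by
  rw [pr_comm, pr_smul_right, pr_comm]

lemma pr_hasDerivAt {v : ℝ → Fin 5 → ℝ} (hv : Differentiable ℝ v)
    (l : Fin 5 → ℝ) (s : ℝ) :
    HasDerivAt (fun u => pr (v u) l) (pr (deriv v s) l) s := by
  have h : ∀ i : Fin 5, HasDerivAt (fun u => v u i) (deriv v s i) s :=
    hasDerivAt_pi.1 (hv s).hasDerivAt
  unfold pr
  exact HasDerivAt.fun_sum fun i _ => (((h i).const_mul _).mul_const _)

theorem stmt12 (γ t nT b₁ b₂ : ℝ → Fin 5 → ℝ) (κ₁ κ₂ κ₃ : ℝ → ℝ)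
    (hγγ : ∀ s, pr (γ s) (γ s) = -1) (htt : ∀ s, pr (t s) (t s) = 1)
    (hTT : ∀ s, pr (nT s) (nT s) = -1)
    (h11 : ∀ s, pr (b₁ s) (b₁ s) = 1) (h22 : ∀ s, pr (b₂ s) (b₂ s) = 1)
    (hγt : ∀ s, pr (γ s) (t s) = 0) (hγT : ∀ s, pr (γ s) (nT s) = 0)
    (hγ1 : ∀ s, pr (γ s) (b₁ s) = 0) (hγ2 : ∀ s, pr (γ s) (b₂ s) = 0)
    (htT : ∀ s, pr (t s) (nT s) = 0) (ht1 : ∀ s, pr (t s) (b₁ s) = 0)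
    (ht2 : ∀ s, pr (t s) (b₂ s) = 0) (hT1 : ∀ s, pr (nT s) (b₁ s) = 0)
    (hT2 : ∀ s, pr (nT s) (b₂ s) = 0) (h12 : ∀ s, pr (b₁ s) (b₂ s) = 0)
    (hdγ : Differentiable ℝ γ) (hdt : Differentiable ℝ t)
    (hdT : Differentiable ℝ nT) (hd1 : Differentiable ℝ b₁) (hd2 : Differentiable ℝ b₂)
    (hF1 : ∀ s, deriv γ s = t s)
    (hF2 : ∀ s, deriv t s = γ s + κ₁ s • nT s)
    (hF3 : ∀ s, deriv nT s = κ₁ s • t s + κ₂ s • b₁ s)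
    (hF4 : ∀ s, deriv b₁ s = κ₂ s • nT s + κ₃ s • b₂ s)
    (hF5 : ∀ s, deriv b₂ s = -(κ₃ s) • b₁ s)
    (hdκ₁ : Differentiable ℝ κ₁) (hdκ₂ : Differentiable ℝ κ₂)
    (hdκ₃ : Differentiable ℝ κ₃)
    (s₀ : ℝ) (hκ₁ : κ₁ s₀ ≠ 0) (θ₀ : ℝ)
    (l₀ : Fin 5 → ℝ)
    (hl : l₀ = γ s₀ - (1 / κ₁ s₀) • (nT s₀ + Real.cos θ₀ • b₁ s₀ + Real.sin θ₀ • b₂ s₀)) :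
    deriv (deriv (deriv (fun s => pr (γ s) l₀ + 1))) s₀ = 0 ↔
      deriv κ₁ s₀ - Real.cos θ₀ * (κ₁ s₀ * κ₂ s₀) = 0 := by
  -- first derivative
  have hd1' : deriv (fun s => pr (γ s) l₀ + 1) = fun s => pr (t s) l₀ := by
    funext u
    have := ((pr_hasDerivAt hdγ l₀ u).add_const 1).deriv
    rw [this, hF1]
  -- second derivative
  have hd2' : deriv (fun s => pr (t s) l₀) =
      fun s => pr (γ s) l₀ + κ₁ s * pr (nT s) l₀ := by
    funext u
    have := (pr_hasDerivAt hdt l₀ u).deriv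
    rw [this, hF2, pr_add_left, pr_smul_left]
  -- third derivative at s₀
  have h3 : deriv (fun s => pr (γ s) l₀ + κ₁ s * pr (nT s) l₀) s₀ =
      pr (t s₀) l₀ + (deriv κ₁ s₀ * pr (nT s₀) l₀ +
        κ₁ s₀ * (κ₁ s₀ * pr (t s₀) l₀ + κ₂ s₀ * pr (b₁ s₀) l₀)) := by
    have h1 := pr_hasDerivAt hdγ l₀ s₀
    have h2 := ((hdκ₁ s₀).hasDerivAt).fun_mul (pr_hasDerivAt hdT l₀ s₀)
    have := (h1.fun_add h2).deriv
    rw [this, hF1, hF3, pr_add_left, pr_smul_left, pr_smul_left]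
  -- inner products with l₀
  have ht0 : pr (t s₀) l₀ = 0 := by
    rw [hl, pr_sub_right, pr_smul_right, pr_add_right, pr_add_right,
      pr_smul_right, pr_smul_right, pr_comm, hγt, htT, ht1, ht2]
    ring
  have hT0 : pr (nT s₀) l₀ = 1 / κ₁ s₀ := by
    rw [hl, pr_sub_right, pr_smul_right, pr_add_right, pr_add_right,
      pr_smul_right, pr_smul_right, pr_comm, hγT, hTT, hT1, hT2]
    ring
  have hb0 : pr (b₁ s₀) l₀ = -(1 / κ₁ s₀) * Real.cos θ₀ := by
    rw [hl, pr_sub_right, pr_smul_right, pr_add_right, pr_add_right,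
      pr_smul_right, pr_smul_right, pr_comm, hγ1, pr_comm (b₁ s₀) (nT s₀), hT1,
      h11, h12]
    ring
  rw [hd1', hd2', h3, ht0, hT0, hb0]
  have hκ : κ₁ s₀ ≠ 0 := hκ₁
  constructor
  · intro h
    field_simp at h
    linarith
  · intro h
    field_simp
    linarith
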